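/- Let {v_1,...,v_n} and {v'_1,...,v'_l} together be n+l linearly independent vectors in R^m (with m ≥ max(n,l), n > 0), and let {u_1,...,u_n} be arbitrary vectors in R^m. Then for any r > 0 there exists ε with 0 < ε < r such that the vectors {u_1 + ε v_1, ..., u_n + ε v_n, v'_1, ..., v'_l} are n+l linearly independent vectors. -/

import Mathlib

open Matrix Polynomial

lemma li_iff_rank {k : Type*} [Fintype k] {m' : Type*} [Fintype m'] (A : Matrix k m' ℝ) :
    LinearIndependent ℝ (fun i => A i) ↔ A.rank = Fintype.card k := by
  rw [A.rank_eq_finrank_span_row, linearIndependent_iff_card_eq_finrank_span, Set.finrank]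
  exact eq_comm

lemma li_iff_det {k : Type*} [Fintype k] [DecidableEq k] {m' : Type*} [Fintype m']
    (B : Matrix k m' ℝ) :
    LinearIndependent ℝ (fun i => B i) ↔ (B * Bᵀ).det ≠ 0 := by
  rw [li_iff_rank B, ← rank_self_mul_transpose, ← li_iff_rank (B * Bᵀ),
    show (LinearIndependent ℝ fun i => (B * Bᵀ) i) ↔ LinearIndependent ℝ (B * Bᵀ).row from Iff.rfl,
    Matrix.linearIndependent_rows_iff_isUnit, Matrix.isUnit_iff_isUnit_det, isUnit_iff_ne_zero]

/-- Perturbed linear independence: if `v₁,…,v_n, v'₁,…,v'_l` are `n+l` linearly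
independent vectors in `ℝ^m` and `u₁,…,u_n` are arbitrary, then for any `r > 0`
there is `0 < ε < r` such that `u₁+εv₁,…,u_n+εv_n, v'₁,…,v'_l` are linearly independent. -/
theorem stmt2 (m n l : ℕ) (hm : max n l ≤ m) (hn : 0 < n)
    (v : Fin n → (Fin m → ℝ)) (v' : Fin l → (Fin m → ℝ)) (u : Fin n → (Fin m → ℝ))
    (h : LinearIndependent ℝ (Sum.elim v v')) (r : ℝ) (hr : 0 < r) :
    ∃ ε : ℝ, 0 < ε ∧ ε < r ∧
      LinearIndependent ℝ (Sum.elim (fun i => u i + ε • v i) v') := by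
  classical
  set W : Matrix (Fin n ⊕ Fin l) (Fin m) ℝ[X] :=
    Matrix.of (Sum.elim (fun i t => C (v i t) + X * C (u i t)) (fun j t => C (v' j t))) with hW
  set p : ℝ[X] := (W * Wᵀ).det with hp
  have hmap : ∀ δ : ℝ, W.map (eval δ) =
      Matrix.of (Sum.elim (fun i => v i + δ • u i) v') := by
    intro δ
    ext i t
    cases i with
    | inl i => simp [hW]; ring
    | inr j => simp [hW]
  have heval : ∀ δ : ℝ, p.eval δ =
      ((Matrix.of (Sum.elim (fun i => v i + δ • u i) v')) *
       (Matrix.of (Sum.elim (fun i => v i + δ • u i) v'))ᵀ).det := by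
    intro δ
    have h1 := RingHom.map_det (evalRingHom δ) (W * Wᵀ)
    have h2 : (W * Wᵀ).map (evalRingHom δ) =
        (W.map (evalRingHom δ)) * (W.map (evalRingHom δ))ᵀ := by
      rw [Matrix.map_mul, Matrix.transpose_map]
    rw [hp, show (eval δ : ℝ[X] → ℝ) = evalRingHom δ from rfl, h1, RingHom.mapMatrix_apply, h2,
      show (evalRingHom δ : ℝ[X] → ℝ) = eval δ from rfl, hmap δ]
  have h0 : p.eval 0 ≠ 0 := by
    rw [heval 0]
    rw [← li_iff_det]
    have : Sum.elim (fun i => v i + (0:ℝ) • u i) v' = Sum.elim v v' := by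
      funext x; cases x <;> simp
    exact this ▸ h
  have hpne : p ≠ 0 := fun hz => h0 (by simp [hz])
  have hfin : {δ : ℝ | p.IsRoot δ}.Finite := Polynomial.finite_setOf_isRoot hpne
  obtain ⟨δ, hδmem, hδroot⟩ := ((Set.Ioi_infinite (r⁻¹)).diff hfin).nonempty
  have hδmem' : r⁻¹ < δ := hδmem
  have hδpos : 0 < δ := lt_trans (by positivity) hδmem'
  refine ⟨δ⁻¹, by positivity, ?_, ?_⟩
  · rw [inv_lt_comm₀ hδpos hr]
    exact hδmem'
  · have hne : p.eval δ ≠ 0 := hδroot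
    rw [heval δ] at hne
    have hLI : LinearIndependent ℝ (Sum.elim (fun i => v i + δ • u i) v') :=
      (li_iff_det (Matrix.of (Sum.elim (fun i => v i + δ • u i) v'))).mpr hne
    have := hLI.units_smul
      (Sum.elim (fun _ => Units.mk0 δ⁻¹ (by positivity)) (fun _ => 1))
    convert this using 1
    funext x
    cases x with
    | inl i =>
      show u i + δ⁻¹ • v i = δ⁻¹ • (v i + δ • u i)
      rw [smul_add, smul_smul, inv_mul_cancel₀ (ne_of_gt hδpos), one_smul, add_comm]
    | inr j => show v' j = (1 : ℝˣ) • v' j; simp
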